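/- Let (Ω, 𝓕, ℙ) be a probability space and let (Y_k)_{k ≥ 0} be independent, identically distributed, integrable real random variables with mean μ := 𝔼[Y₀]. Define ξ : [0,∞) × Ω → ℝ by ξ(t,ω) := Y_{⌊t⌋}(ω). Then with probability one, for every T > 0, lim_{δ → 0⁺} sup_{t ∈ [0,T]} | δ ∫₀^{t/δ} ξ(s,·) ds − μ t | = 0. -/

import Mathlib

open MeasureTheory Set Filter
open scoped Topology


lemma pc_ae (g : ℕ → ℝ) (n : ℕ) (a b : ℝ) (ha : (n:ℝ) ≤ a) (hb : b ≤ n+1) :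
    (fun s => g ⌊s⌋₊) =ᵐ[volume.restrict (Set.Ioc a b)] fun _ => g n := by
  rw [Filter.EventuallyEq, ae_restrict_iff' measurableSet_Ioc]
  have hnull : (volume : Measure ℝ) {((n:ℝ)+1)} = 0 := measure_singleton _
  refine (measure_mono_null ?_ hnull : _)
  intro s hs
  simp only [Set.mem_setOf_eq, Set.mem_singleton_iff] at *
  by_contra hsne
  apply hs
  intro hmem
  have h1 : (n:ℝ) < s := lt_of_le_of_lt ha hmem.1
  have h2 : s < (n:ℝ) + 1 := lt_of_le_of_ne (le_trans hmem.2 hb) hsne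
  have : ⌊s⌋₊ = n := by
    rw [Nat.floor_eq_iff (le_of_lt (lt_of_le_of_lt (Nat.cast_nonneg n) h1))]
    exact ⟨le_of_lt h1, by exact_mod_cast h2⟩
  rw [this]

lemma pc_intInt (g : ℕ → ℝ) (n : ℕ) (a b : ℝ) (ha : (n:ℝ) ≤ a) (hab : a ≤ b) (hb : b ≤ n+1) :
    IntervalIntegrable (fun s => g ⌊s⌋₊) volume a b := by
  rw [intervalIntegrable_iff_integrableOn_Ioc_of_le hab]
  exact (integrableOn_const measure_Ioc_lt_top.ne).congr
    ((pc_ae g n a b ha hb).symm)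

lemma pc_integral (g : ℕ → ℝ) (n : ℕ) (a b : ℝ) (ha : (n:ℝ) ≤ a) (hab : a ≤ b) (hb : b ≤ n+1) :
    ∫ s in a..b, g ⌊s⌋₊ = (b - a) * g n := by
  rw [intervalIntegral.integral_of_le hab, setIntegral_congr_ae measurableSet_Ioc
    ((ae_restrict_iff' measurableSet_Ioc).mp (pc_ae g n a b ha hb))]
  simp [Real.volume_Ioc, ENNReal.toReal_ofReal (sub_nonneg.2 hab), hab]


lemma pc_intInt_zero (g : ℕ → ℝ) (n : ℕ) :
    IntervalIntegrable (fun s => g ⌊s⌋₊) volume 0 n := by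
  induction n with
  | zero => simp
  | succ n ih =>
    have hc : ((n+1 : ℕ) : ℝ) = (n:ℝ)+1 := by push_cast; ring
    rw [hc]
    exact ih.trans (pc_intInt g n n ((n:ℝ)+1) le_rfl
      (by linarith [Nat.cast_nonneg (α := ℝ) n]) le_rfl)

lemma pc_integral_zero (g : ℕ → ℝ) (n : ℕ) :
    ∫ s in (0:ℝ)..(n:ℕ), g ⌊s⌋₊ = ∑ k ∈ Finset.range n, g k := by
  induction n with
  | zero => simp
  | succ n ih =>
    have h1 : IntervalIntegrable (fun s => g ⌊s⌋₊) volume 0 n := pc_intInt_zero g n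
    have h2 : IntervalIntegrable (fun s => g ⌊s⌋₊) volume n ((n:ℝ)+1) :=
      pc_intInt g n n ((n:ℝ)+1) le_rfl (by linarith) le_rfl
    have := intervalIntegral.integral_add_adjacent_intervals h1 h2
    rw [Finset.sum_range_succ, ← ih, Nat.cast_succ, ← this,
      pc_integral g n n ((n:ℝ)+1) le_rfl (by linarith) le_rfl]
    ring

lemma pc_formula (g : ℕ → ℝ) (u : ℝ) (hu : 0 ≤ u) :
    ∫ s in (0:ℝ)..u, g ⌊s⌋₊
      = (∑ k ∈ Finset.range ⌊u⌋₊, g k) + (u - ⌊u⌋₊) * g ⌊u⌋₊ := by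
  set n := ⌊u⌋₊ with hn
  have h1 : (n:ℝ) ≤ u := Nat.floor_le hu
  have h2 : u < n + 1 := Nat.lt_floor_add_one u
  have hi1 : IntervalIntegrable (fun s => g ⌊s⌋₊) volume 0 n := pc_intInt_zero g n
  have hi2 : IntervalIntegrable (fun s => g ⌊s⌋₊) volume n u :=
    pc_intInt g n n u le_rfl h1 h2.le
  rw [← intervalIntegral.integral_add_adjacent_intervals hi1 hi2,
    pc_integral_zero, pc_integral g n n u le_rfl h1 h2.le]


lemma shift_div (g : ℕ → ℝ) (μ : ℝ)
    (h1 : Tendsto (fun n : ℕ => (∑ k ∈ Finset.range n, g k) / n) atTop (𝓝 μ)) :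
    Tendsto (fun n : ℕ => g n / n) atTop (𝓝 0) := by
  have hs1 : Tendsto (fun n : ℕ => (∑ k ∈ Finset.range (n+1), g k) / (n+1)) atTop (𝓝 μ) := by
    have h := h1.comp (tendsto_add_atTop_nat 1)
    refine h.congr fun n => ?_
    simp [Function.comp]
  have hrat : Tendsto (fun n : ℕ => ((n:ℝ)+1) / n) atTop (𝓝 1) := by
    have h0 : Tendsto (fun n : ℕ => 1 + 1/(n:ℝ)) atTop (𝓝 (1 + 0)) :=
      tendsto_const_nhds.add tendsto_one_div_atTop_nhds_zero_nat
    rw [add_zero] at h0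
    refine h0.congr' ?_
    filter_upwards [eventually_ge_atTop 1] with n hn
    have : (n:ℝ) ≠ 0 := by positivity
    field_simp
  have hs2 : Tendsto (fun n : ℕ => (∑ k ∈ Finset.range (n+1), g k) / n) atTop (𝓝 μ) := by
    have := hs1.mul hrat
    rw [mul_one] at this
    refine this.congr' ?_
    filter_upwards [eventually_ge_atTop 1] with n hn
    have h0 : (n:ℝ) ≠ 0 := by positivity
    have h1 : (n:ℝ)+1 ≠ 0 := by positivity
    field_simp
  have := hs2.sub h1
  rw [sub_self] at this
  refine this.congr ?_
  intro n
  rw [Finset.sum_range_succ, ← sub_div]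
  ring_nf

lemma main_det (g : ℕ → ℝ) (μ : ℝ)
    (h1 : Tendsto (fun n : ℕ => (∑ k ∈ Finset.range n, g k) / n) atTop (𝓝 μ))
    (T : ℝ) (hT : 0 < T) :
    Tendsto
      (fun δ : ℝ =>
        sSup ((fun t : ℝ =>
          |δ * (∫ s in (0 : ℝ)..(t / δ), g ⌊s⌋₊) - μ * t|) '' Icc (0 : ℝ) T))
      (𝓝[>] (0 : ℝ)) (𝓝 0) := by
  have h2 := shift_div g μ h1
  rw [Metric.tendsto_nhdsWithin_nhds]
  intro ε hε
  set a : ℕ → ℝ := fun n => |(∑ k ∈ Finset.range n, g k) - μ * n| + |g n| + |μ| with ha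
  have hanneg : ∀ n, 0 ≤ a n := fun n => by positivity
  set c : ℝ := ε / (4 * T) with hc
  have hcpos : 0 < c := by positivity
  clear_value a c
  -- eventual linear bound for a
  have hev : ∀ᶠ n : ℕ in atTop, a n ≤ c * n := by
    have e1 : ∀ᶠ n : ℕ in atTop, |(∑ k ∈ Finset.range n, g k) / n - μ| < c/4 := by
      have := Metric.tendsto_atTop.mp (Metric.tendsto_atTop.mpr (fun e he => Metric.tendsto_atTop.mp h1 e he)) (c/4) (by positivity)
      rcases this with ⟨N, hN⟩
      exact eventually_atTop.2 ⟨N, fun n hn => by simpa [Real.dist_eq] using hN n hn⟩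
    have e2 : ∀ᶠ n : ℕ in atTop, |g n / n| < c/4 := by
      have := Metric.tendsto_atTop.mp h2 (c/4) (by positivity)
      rcases this with ⟨N, hN⟩
      exact eventually_atTop.2 ⟨N, fun n hn => by simpa [Real.dist_eq, abs_div, Nat.abs_cast] using hN n hn⟩
    have e3 : ∀ᶠ n : ℕ in atTop, |μ| / n < c/4 := by
      have h0 : Tendsto (fun n : ℕ => |μ| * (1/(n:ℝ))) atTop (𝓝 (|μ| * 0)) :=
        tendsto_const_nhds.mul tendsto_one_div_atTop_nhds_zero_nat
      rw [mul_zero] at h0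
      have := Metric.tendsto_atTop.mp h0 (c/4) (by positivity)
      rcases this with ⟨N, hN⟩
      refine eventually_atTop.2 ⟨N, fun n hn => ?_⟩
      have h := hN n hn
      rw [Real.dist_eq, sub_zero, abs_of_nonneg (by positivity), mul_one_div] at h
      exact h
    filter_upwards [e1, e2, e3, eventually_ge_atTop 1] with n hn1 hn2 hn3 hn4
    have hnpos : (0:ℝ) < n := by exact_mod_cast hn4
    have b1 : |(∑ k ∈ Finset.range n, g k) - μ * n| ≤ (c/4) * n := by
      have : |(∑ k ∈ Finset.range n, g k) - μ * n| = |(∑ k ∈ Finset.range n, g k) / n - μ| * n := by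
        rw [← abs_of_pos hnpos, ← abs_mul]
        congr 1
        field_simp
        simp only [abs_of_pos hnpos]
        ring
      rw [this]
      exact mul_le_mul_of_nonneg_right hn1.le hnpos.le
    have b2 : |g n| ≤ (c/4) * n := by
      have : |g n| = |g n / n| * n := by
        rw [← abs_of_pos hnpos, ← abs_mul]; congr 1; field_simp; rw [abs_of_pos hnpos]
      rw [this]
      exact mul_le_mul_of_nonneg_right hn2.le hnpos.le
    have b3 : |μ| ≤ (c/4) * n := by
      have : |μ| = (|μ|/n) * n := by field_simp
      rw [this]
      exact mul_le_mul_of_nonneg_right hn3.le hnpos.le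
    have : a n ≤ 3 * ((c/4) * n) := by rw [ha]; dsimp only; linarith
    nlinarith [mul_pos hcpos hnpos]
  rcases eventually_atTop.1 hev with ⟨N, hN⟩
  set M : ℝ := ∑ k ∈ Finset.range (N+1), a k with hM
  have hMnneg : 0 ≤ M := Finset.sum_nonneg fun k _ => hanneg k
  have haM : ∀ n ≤ N, a n ≤ M :=
    fun n hn => Finset.single_le_sum (fun k _ => hanneg k) (Finset.mem_range.2 (Nat.lt_succ_of_le hn))
  refine ⟨ε / (2 * (M+1)), by positivity, ?_⟩
  intro δ hδ hdist
  rw [Real.dist_eq, sub_zero, abs_of_pos hδ] at hdist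
  have hδpos : (0:ℝ) < δ := hδ
  -- pointwise bound
  have key : ∀ t ∈ Icc (0:ℝ) T,
      |δ * (∫ s in (0 : ℝ)..(t / δ), g ⌊s⌋₊) - μ * t| ≤ ε/2 := by
    intro t ht
    obtain ⟨ht0, htT⟩ := ht
    set u : ℝ := t / δ with hu
    have hu0 : 0 ≤ u := div_nonneg ht0 hδpos.le
    set n : ℕ := ⌊u⌋₊ with hn
    have hnu : (n:ℝ) ≤ u := Nat.floor_le hu0
    have hun : u - n ≤ 1 := by
      have := Nat.lt_floor_add_one u; linarith
    have hun0 : 0 ≤ u - n := by linarith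
    have hform := pc_formula g u hu0
    have htδ : t = δ * u := by rw [hu]; field_simp
    have expand : δ * (∫ s in (0 : ℝ)..(t / δ), g ⌊s⌋₊) - μ * t
        = δ * (((∑ k ∈ Finset.range n, g k) - μ * n) + (u - n) * (g n - μ)) := by
      rw [← hu, hform, htδ, ← hn]; ring
    have bound1 : |δ * (∫ s in (0 : ℝ)..(t / δ), g ⌊s⌋₊) - μ * t| ≤ δ * a n := by
      rw [expand, abs_mul, abs_of_pos hδpos]
      refine mul_le_mul_of_nonneg_left ?_ hδpos.le
      calc |((∑ k ∈ Finset.range n, g k) - μ * n) + (u - n) * (g n - μ)|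
          ≤ |(∑ k ∈ Finset.range n, g k) - μ * n| + |(u - n) * (g n - μ)| := abs_add_le _ _
        _ ≤ |(∑ k ∈ Finset.range n, g k) - μ * n| + 1 * |g n - μ| := by
            rw [abs_mul]
            gcongr
            rw [abs_of_nonneg hun0]; exact hun
        _ ≤ a n := by
            rw [one_mul, ha]
            have := abs_sub (g n) μ
            dsimp only
            linarith [abs_sub_abs_le_abs_sub (g n) μ, abs_sub (g n) μ]
    refine le_trans bound1 ?_
    by_cases hcase : n ≤ N
    · calc δ * a n ≤ δ * M := mul_le_mul_of_nonneg_left (haM n hcase) hδpos.le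
        _ ≤ (ε / (2 * (M+1))) * M := mul_le_mul_of_nonneg_right hdist.le hMnneg
        _ ≤ ε/2 := by
            rw [div_mul_eq_mul_div, div_le_div_iff₀ (by positivity) (by norm_num)]
            nlinarith [hε.le, hMnneg]
    · push_neg at hcase
      have h5 : a n ≤ c * n := hN n hcase.le
      calc δ * a n ≤ δ * (c * n) := mul_le_mul_of_nonneg_left h5 hδpos.le
        _ ≤ δ * (c * u) := by
            refine mul_le_mul_of_nonneg_left (mul_le_mul_of_nonneg_left hnu hcpos.le) hδpos.le
        _ = c * t := by rw [hu]; field_simp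
        _ ≤ c * T := mul_le_mul_of_nonneg_left htT hcpos.le
        _ = ε/4 := by rw [hc]; field_simp
        _ ≤ ε/2 := by linarith
  -- conclude about sSup
  have hne : ((fun t : ℝ =>
      |δ * (∫ s in (0 : ℝ)..(t / δ), g ⌊s⌋₊) - μ * t|) '' Icc (0 : ℝ) T).Nonempty :=
    ⟨_, Set.mem_image_of_mem _ (Set.left_mem_Icc.2 hT.le)⟩
  have hub : ∀ x ∈ ((fun t : ℝ =>
      |δ * (∫ s in (0 : ℝ)..(t / δ), g ⌊s⌋₊) - μ * t|) '' Icc (0 : ℝ) T), x ≤ ε/2 := by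
    rintro x ⟨t, ht, rfl⟩; exact key t ht
  have hle : sSup ((fun t : ℝ =>
      |δ * (∫ s in (0 : ℝ)..(t / δ), g ⌊s⌋₊) - μ * t|) '' Icc (0 : ℝ) T) ≤ ε/2 :=
    csSup_le hne hub
  have hge : 0 ≤ sSup ((fun t : ℝ =>
      |δ * (∫ s in (0 : ℝ)..(t / δ), g ⌊s⌋₊) - μ * t|) '' Icc (0 : ℝ) T) := by
    refine le_csSup_of_le ⟨ε/2, hub⟩ (Set.mem_image_of_mem _ (Set.left_mem_Icc.2 hT.le)) ?_
    positivity
  rw [Real.dist_eq, sub_zero, abs_of_nonneg hge]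
  linarith

/-- let `(Y_k)` be i.i.d. integrable real random variables with
mean `μ`, and let `ξ(t,ω) := Y_{⌊t⌋}(ω)` be the associated piecewise-constant
path.  Then with probability one, for every `T > 0`,
`sup_{t ∈ [0,T]} |δ ∫₀^{t/δ} ξ(s,·) ds − μ t| → 0` as `δ → 0⁺`. -/
theorem averaged_piecewise_constant_lln
    {Ω : Type*} [MeasurableSpace Ω] (P : Measure Ω) [IsProbabilityMeasure P]
    (Y : ℕ → Ω → ℝ) (hmeas : ∀ k, Measurable (Y k))
    (hindep : ProbabilityTheory.iIndepFun Y P)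
    (hident : ∀ k, ProbabilityTheory.IdentDistrib (Y k) (Y 0) P P)
    (hint : Integrable (Y 0) P) :
    ∀ᵐ ω ∂P, ∀ T > (0 : ℝ),
      Tendsto
        (fun δ : ℝ =>
          sSup ((fun t : ℝ =>
            |δ * (∫ s in (0 : ℝ)..(t / δ), Y ⌊s⌋₊ ω) - (∫ x, Y 0 x ∂P) * t|) ''
              Icc (0 : ℝ) T))
        (𝓝[>] (0 : ℝ)) (𝓝 0) := by
  have hpair : Pairwise (Function.onFun (ProbabilityTheory.IndepFun · · P) Y) :=
    fun i j hij => hindep.indepFun hij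
  have hslln := ProbabilityTheory.strong_law_ae_real Y hint hpair hident
  filter_upwards [hslln] with ω hω
  intro T hT
  exact main_det (fun k => Y k ω) (∫ x, Y 0 x ∂P) hω T hT
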